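/- arXiv:0909.2878 — 3 statements merged into one kernel-verified Lean document; each statement's English description precedes it below -/
import Mathlib

section
/- Let Re β ≥ 0, h ∈ ℂ, and let z ∈ ℂ be such that z⁻¹ lies neither in the spectrum of e^{−βh}L↑_β nor in the spectrum of e^{βh}L↓_β (as bounded operators on H^∞(Π)). Then the following operator identity holds on H^∞(Π): [1 + M↓_{β,ze^{βh}}][1 − zL_{β,h}][1 + M↑_{β,ze^{−βh}}] = 1 − M↓_{β,ze^{βh}}M↑_{β,ze^{−βh}}. -/
open Complex BoundedContinuousFunction
open scoped ENNReal

/-- The open right half-plane `Π = {z : ℂ | 0 < Re z}`. -/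
def RHP : Set ℂ := {z : ℂ | 0 < z.re}

/-- Extension of a bounded continuous function on `Π` to `ℂ` (by zero off `Π`). -/
noncomputable def extFun (f : ↥RHP →ᵇ ℂ) : ℂ → ℂ :=
  fun z => if h : 0 < z.re then f ⟨z, h⟩ else 0

/-- `H^∞(Π)`: the space of bounded holomorphic functions on `Π`, realised as the
submodule of the Banach space of bounded continuous functions on `Π` (with the
supremum norm) consisting of the holomorphic ones. -/
noncomputable def Hinf : Submodule ℂ (↥RHP →ᵇ ℂ) where
  carrier := {f | DifferentiableOn ℂ (extFun f) RHP}
  add_mem' := by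
    intro f g hf hg
    refine (DifferentiableOn.add hf hg).congr (fun z hz => ?_)
    have hz' : 0 < z.re := hz
    simp [extFun, hz']
  zero_mem' := by
    refine (differentiableOn_const 0).congr (fun z hz => ?_)
    have hz' : 0 < z.re := hz
    simp only [extFun]
    rw [dif_pos hz']
    rfl
  smul_mem' := by
    intro c f hf
    refine (hf.const_smul c).congr (fun z hz => ?_)
    have hz' : 0 < z.re := hz
    simp [extFun, hz']

lemma mem_shift (z : ↥RHP) : (1 : ℂ) + z.1 ∈ RHP := by
  have hz := z.2
  simp only [RHP, Set.mem_setOf_eq, Complex.add_re, Complex.one_re] at *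
  linarith

lemma mem_div (z : ↥RHP) : z.1 / (1 + z.1) ∈ RHP := by
  have hz := z.2
  simp only [RHP, Set.mem_setOf_eq] at hz ⊢
  have hw : (1 + z.1) ≠ 0 := by
    intro h
    have h2 : (1 + z.1).re = 0 := by rw [h]; simp
    simp only [Complex.add_re, Complex.one_re] at h2
    linarith
  have hns : 0 < Complex.normSq (1 + z.1) := Complex.normSq_pos.mpr hw
  rw [Complex.div_re]
  have h1 : 0 < z.1.re * (1 + z.1).re := by
    simp only [Complex.add_re, Complex.one_re]
    nlinarith
  have h2 : 0 ≤ z.1.im * (1 + z.1).im := by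
    simp only [Complex.add_im, Complex.one_im, zero_add]
    nlinarith [sq_nonneg z.1.im]
  have := div_pos h1 hns
  have := div_nonneg h2 hns.le
  linarith

/-- Pointwise characterisation of the transfer operator
`(L↑_β f)(z) = (1+z)^(-2β) f(z/(1+z))` on `H^∞(Π)` (principal branch power). -/
def IsLup (β : ℂ) (T : ↥Hinf →L[ℂ] ↥Hinf) : Prop :=
  ∀ f : ↥Hinf, ∀ z : ↥RHP,
    (T f).1 z = (1 + z.1) ^ (-(2 * β)) * f.1 ⟨z.1 / (1 + z.1), mem_div z⟩

/-- Pointwise characterisation of the transfer operator `(L↓ f)(z) = f(1+z)` on `H^∞(Π)`. -/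
def IsLdn (T : ↥Hinf →L[ℂ] ↥Hinf) : Prop :=
  ∀ f : ↥Hinf, ∀ z : ↥RHP, (T f).1 z = f.1 ⟨1 + z.1, mem_shift z⟩

/-- The cluster operator `M_{T,τ} = τ T (1 - τ T)⁻¹`, via `Ring.inverse` (which agrees
with the genuine inverse whenever `1 - τ T` is invertible). -/
noncomputable def Mop (T : ↥Hinf →L[ℂ] ↥Hinf) (τ : ℂ) : ↥Hinf →L[ℂ] ↥Hinf :=
  (τ • T) * Ring.inverse (1 - τ • T)

section Aux

lemma key_unit {R : Type*} [Ring R] [Algebra ℂ R] (z c : ℂ) (T : R)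
    (hu : z⁻¹ ∉ spectrum ℂ (c • T)) : IsUnit (1 - (z * c) • T) := by
  by_cases hz : z = 0
  · rw [hz, zero_mul, zero_smul, sub_zero]; exact isUnit_one
  · have hu' := spectrum.notMem_iff.mp hu
    have heq : (1 : R) - (z * c) • T = z • (algebraMap ℂ R z⁻¹ - c • T) := by
      rw [smul_sub, smul_smul, Algebra.algebraMap_eq_smul_one, smul_smul,
        mul_inv_cancel₀ hz, one_smul]
    rw [heq, Algebra.smul_def]
    exact ((isUnit_iff_ne_zero.mpr hz).map (algebraMap ℂ R)).mul hu'

lemma smul_comb {R : Type*} [Ring R] [Algebra ℂ R] (z c₁ c₂ : ℂ) (T₁ T₂ : R) :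
    z • (c₁ • T₁ + c₂ • T₂) = (z * c₁) • T₁ + (z * c₂) • T₂ := by
  rw [smul_add, smul_smul, smul_smul]

lemma cluster_core {R : Type*} [Ring R] (A B : R)
    (hA : IsUnit (1 - A)) (hB : IsUnit (1 - B)) :
    (1 + B * Ring.inverse (1 - B)) * (1 - (A + B)) * (1 + A * Ring.inverse (1 - A))
      = 1 - B * Ring.inverse (1 - B) * (A * Ring.inverse (1 - A)) := by
  set iA := Ring.inverse (1 - A) with hiA
  set iB := Ring.inverse (1 - B) with hiB
  have hA1 : (1 - A) * iA = 1 := Ring.mul_inverse_cancel _ hA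
  have hB1 : (1 - B) * iB = 1 := Ring.mul_inverse_cancel _ hB
  have hB2 : iB * (1 - B) = 1 := Ring.inverse_mul_cancel _ hB
  have e1 : 1 + A * iA = iA := by
    calc 1 + A * iA = ((1 - A) + A) * iA := by rw [add_mul, hA1]
      _ = iA := by rw [sub_add_cancel, one_mul]
  have e2 : 1 + B * iB = iB := by
    calc 1 + B * iB = ((1 - B) + B) * iB := by rw [add_mul, hB1]
      _ = iB := by rw [sub_add_cancel, one_mul]
  have hcomm : B * iB = iB * B := by
    calc B * iB = (iB * (1 - B)) * (B * iB) := by rw [hB2, one_mul]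
      _ = iB * ((B * (1 - B)) * iB) := by noncomm_ring
      _ = iB * (B * ((1 - B) * iB)) := by noncomm_ring
      _ = iB * B := by rw [hB1, mul_one]
  rw [e1, e2, hcomm]
  have hfact : (1 : R) - (A + B) = (1 - B) * (1 - A) - B * A := by noncomm_ring
  rw [hfact]
  calc iB * ((1 - B) * (1 - A) - B * A) * iA
      = (iB * (1 - B)) * ((1 - A) * iA) - iB * B * (A * iA) := by noncomm_ring
    _ = 1 - iB * B * (A * iA) := by rw [hA1, hB2, one_mul]

end Aux

set_option maxHeartbeats 2000000 in
set_option synthInstance.maxHeartbeats 1000000 in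
/-- (Lemma 1, Eq. (20)): with `M↓ = M↓_{β,ze^{βh}}`, `M↑ = M↑_{β,ze^{-βh}}`
and `L_{β,h} = e^{-βh}L↑_β + e^{βh}L↓_β`, one has
`[1 + M↓][1 - zL_{β,h}][1 + M↑] = 1 - M↓M↑`. -/
theorem cluster_operator_identity (β h z : ℂ) (hβ : 0 ≤ β.re)
    (Lup Ldn : ↥Hinf →L[ℂ] ↥Hinf) (hup : IsLup β Lup) (hdn : IsLdn Ldn)
    (hz1 : z⁻¹ ∉ spectrum ℂ (Complex.exp (-(β * h)) • Lup))
    (hz2 : z⁻¹ ∉ spectrum ℂ (Complex.exp (β * h) • Ldn)) :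
    (1 + Mop Ldn (z * Complex.exp (β * h)))
        * (1 - z • (Complex.exp (-(β * h)) • Lup + Complex.exp (β * h) • Ldn))
        * (1 + Mop Lup (z * Complex.exp (-(β * h))))
      = 1 - Mop Ldn (z * Complex.exp (β * h)) * Mop Lup (z * Complex.exp (-(β * h))) := by
  have hA : IsUnit (1 - (z * Complex.exp (-(β * h))) • Lup) :=
    key_unit z (Complex.exp (-(β * h))) Lup hz1
  have hB : IsUnit (1 - (z * Complex.exp (β * h)) • Ldn) :=
    key_unit z (Complex.exp (β * h)) Ldn hz2
  rw [smul_comb z (Complex.exp (-(β * h))) (Complex.exp (β * h)) Lup Ldn]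
  exact cluster_core ((z * Complex.exp (-(β * h))) • Lup)
    ((z * Complex.exp (β * h)) • Ldn) hA hB
end

section
/- For 0 < τ < 1, the following identity holds: (1/log 2)·∫₀¹ Σ_{n≥1} (τⁿ − 1)/((n+x)(n+1+x)) dx = −((1−τ)²/(τ² log 2))·Σ_{n≥1} τⁿ log n. In the notation of the paper this reads μ((M_τ − M_1)g) = −((1−τ)²/(τ² log 2))·Σ_{n≥1} τⁿ log n, where μ is integration against Lebesgue measure on [0,1], g(x) = 1/(log 2 · (1+x)), and (M_τ f)(x) = Σ_{n≥1} τⁿ (n+x)^{−2} f(1/(n+x)). -/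
open Real MeasureTheory intervalIntegral Filter

/-- Summability of `τ^(n+1) log(n+c)` for `c ≥ 1`. -/
lemma summable_pow_mul_log (τ : ℝ) (h0 : 0 < τ) (h1 : τ < 1) (c : ℝ) (hc : 1 ≤ c) :
    Summable (fun n : ℕ => τ ^ (n + 1) * Real.log ((n : ℝ) + c)) := by
  have hmaj : Summable (fun n : ℕ => ((n : ℝ) + c) * τ ^ n) := by
    have h1' : Summable (fun n : ℕ => (n : ℝ) ^ 1 * τ ^ n) :=
      summable_pow_mul_geometric_of_norm_lt_one 1 (by rw [Real.norm_eq_abs, abs_of_pos h0]; exact h1)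
    have h2' : Summable (fun n : ℕ => c * τ ^ n) :=
      (summable_geometric_of_lt_one h0.le h1).mul_left c
    have := h1'.add h2'
    refine this.congr (fun n => by ring)
  refine Summable.of_nonneg_of_le (fun n => ?_) (fun n => ?_) hmaj
  · have : (1:ℝ) ≤ (n : ℝ) + c := by
      have : (0:ℝ) ≤ (n:ℝ) := Nat.cast_nonneg n
      linarith
    exact mul_nonneg (pow_nonneg h0.le _) (Real.log_nonneg this)
  · have hpos : (0:ℝ) < (n : ℝ) + c := by
      have : (0:ℝ) ≤ (n:ℝ) := Nat.cast_nonneg n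
      linarith
    have hlog : Real.log ((n : ℝ) + c) ≤ (n : ℝ) + c := by
      have := Real.log_le_sub_one_of_pos hpos
      linarith
    have hpow : τ ^ (n + 1) ≤ τ ^ n := by
      apply pow_le_pow_of_le_one h0.le h1.le
      omega
    calc τ ^ (n + 1) * Real.log ((n : ℝ) + c)
        ≤ τ ^ n * Real.log ((n : ℝ) + c) := by
          apply mul_le_mul_of_nonneg_right hpow
          apply Real.log_nonneg
          have : (0:ℝ) ≤ (n:ℝ) := Nat.cast_nonneg n
          linarith
      _ ≤ τ ^ n * ((n : ℝ) + c) := by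
          apply mul_le_mul_of_nonneg_left hlog (pow_nonneg h0.le _)
      _ = ((n : ℝ) + c) * τ ^ n := by ring

lemma integral_inv_shift (c : ℝ) (hc : 0 < c) :
    ∫ x in (0:ℝ)..1, (c + x)⁻¹ = Real.log (c + 1) - Real.log c := by
  have h := intervalIntegral.integral_comp_add_left (a := (0:ℝ)) (b := 1) (fun x => x⁻¹) c
  simp only [add_zero] at h
  rw [h, integral_inv, Real.log_div (by linarith) (by linarith)]
  intro hmem
  rw [Set.uIcc_of_le (by linarith)] at hmem
  exact absurd hmem.1 (by linarith)

lemma intervalIntegrable_inv_shift (c : ℝ) (hc : 0 < c) :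
    IntervalIntegrable (fun x => (c + x)⁻¹) volume 0 1 := by
  apply ContinuousOn.intervalIntegrable
  apply ContinuousOn.inv₀ (Continuous.continuousOn (by continuity))
  intro x hx
  rw [Set.uIcc_of_le (by norm_num)] at hx
  have := hx.1
  positivity

lemma integral_term (c : ℝ) (hc : 1 ≤ c) :
    ∫ x in (0:ℝ)..1, ((c + x) * (c + 1 + x))⁻¹
      = (Real.log (c + 1) - Real.log c) - (Real.log (c + 2) - Real.log (c + 1)) := by
  have hc0 : (0:ℝ) < c := by linarith
  have hc1 : (0:ℝ) < c + 1 := by linarith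
  have hcong : ∀ x ∈ Set.uIcc (0:ℝ) 1,
      ((c + x) * (c + 1 + x))⁻¹ = (c + x)⁻¹ - (c + 1 + x)⁻¹ := by
    intro x hx
    rw [Set.uIcc_of_le (by norm_num)] at hx
    have h1 : (0:ℝ) < c + x := by have := hx.1; linarith
    have h2 : (0:ℝ) < c + 1 + x := by have := hx.1; linarith
    field_simp
    ring
  rw [intervalIntegral.integral_congr hcong,
    intervalIntegral.integral_sub (intervalIntegrable_inv_shift c hc0) ?_,
    integral_inv_shift c hc0]
  · have h := integral_inv_shift (c + 1) hc1
    have : (fun x => (c + 1 + x)⁻¹) = (fun x => ((c+1) + x)⁻¹) := rfl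
    rw [this, h]
    have : c + 1 + 1 = c + 2 := by ring
    rw [this]
  · exact intervalIntegrable_inv_shift (c + 1) hc1

/-- Telescoping: `∑' n, ((log(n+2)-log(n+1)) - (log(n+3)-log(n+2))) = log 2`. -/
lemma telescope_hasSum :
    HasSum (fun n : ℕ =>
      (Real.log ((n:ℝ) + 2) - Real.log ((n:ℝ) + 1))
        - (Real.log ((n:ℝ) + 3) - Real.log ((n:ℝ) + 2))) (Real.log 2) := by
  set g : ℕ → ℝ := fun n => Real.log ((n:ℝ) + 2) - Real.log ((n:ℝ) + 1) with hg
  have hgeq : ∀ n : ℕ,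
      (Real.log ((n:ℝ) + 2) - Real.log ((n:ℝ) + 1))
        - (Real.log ((n:ℝ) + 3) - Real.log ((n:ℝ) + 2)) = g n - g (n + 1) := by
    intro n
    simp only [hg]
    push_cast
    ring_nf
  have hgpos : ∀ n : ℕ, 0 ≤ g n - g (n+1) := by
    intro n
    simp only [hg]
    push_cast
    ring_nf
    have e1 : Real.log ((n:ℝ) + 1) + Real.log ((n:ℝ) + 3)
        = Real.log (((n:ℝ) + 1) * ((n:ℝ) + 3)) := by
      rw [Real.log_mul (by positivity) (by positivity)]
    have e2 : Real.log ((n:ℝ) + 2) + Real.log ((n:ℝ) + 2)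
        = Real.log (((n:ℝ) + 2) * ((n:ℝ) + 2)) := by
      rw [Real.log_mul (by positivity) (by positivity)]
    have hle : Real.log (((n:ℝ) + 1) * ((n:ℝ) + 3)) ≤ Real.log (((n:ℝ) + 2) * ((n:ℝ) + 2)) := by
      apply Real.log_le_log (by positivity)
      nlinarith [Nat.cast_nonneg (α := ℝ) n]
    ring_nf at hle e1 e2 ⊢
    nlinarith [hle, e1, e2]
  have hgtendsto : Tendsto g atTop (nhds 0) := by
    have hbound : ∀ n : ℕ, g n ≤ 1 / ((n:ℝ) + 1) := by
      intro n
      simp only [hg]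
      have h1 : (0:ℝ) < (n:ℝ) + 1 := by positivity
      have h2 : (0:ℝ) < (n:ℝ) + 2 := by positivity
      have := Real.log_le_sub_one_of_pos (x := ((n:ℝ)+2)/((n:ℝ)+1)) (by positivity)
      rw [Real.log_div (by positivity) (by positivity)] at this
      have : Real.log ((n:ℝ)+2) - Real.log ((n:ℝ)+1) ≤ ((n:ℝ)+2)/((n:ℝ)+1) - 1 := this
      have heq : ((n:ℝ)+2)/((n:ℝ)+1) - 1 = 1 / ((n:ℝ)+1) := by field_simp; norm_num
      linarith
    have hnn : ∀ n : ℕ, 0 ≤ g n := by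
      intro n
      simp only [hg]
      apply sub_nonneg.mpr
      apply Real.log_le_log (by positivity)
      linarith
    exact squeeze_zero hnn hbound tendsto_one_div_add_atTop_nhds_zero_nat
  have key : HasSum (fun n => g n - g (n+1)) (g 0) := by
    rw [hasSum_iff_tendsto_nat_of_nonneg hgpos]
    have : (fun n => ∑ i ∈ Finset.range n, (g i - g (i+1))) = fun n => g 0 - g n := by
      funext n; exact Finset.sum_range_sub' g n
    rw [this]
    simpa using (tendsto_const_nhds.sub hgtendsto)
  have hg0 : g 0 = Real.log 2 := by
    simp [hg]
  rw [← hg0]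
  exact key.congr_fun fun n => (hgeq n)

set_option maxHeartbeats 1000000 in
/-- For `0 < τ < 1`:
`(1/log 2) ∫₀¹ Σ_{n≥1} (τⁿ - 1)/((n+x)(n+1+x)) dx
  = -((1-τ)²/(τ² log 2)) Σ_{n≥1} τⁿ log n`,
i.e. `μ((M_τ - M₁)g) = -((1-τ)²/(τ² log 2)) Σ_{n≥1} τⁿ log n`. -/
theorem cluster_generating_integral (τ : ℝ) (h0 : 0 < τ) (h1 : τ < 1) :
    (1 / Real.log 2) *
        ∫ x in (0 : ℝ)..1,
          ∑' n : ℕ, (τ ^ (n + 1) - 1) / (((n : ℝ) + 1 + x) * ((n : ℝ) + 2 + x))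
      = -((1 - τ) ^ 2 / (τ ^ 2 * Real.log 2)) *
          ∑' n : ℕ, τ ^ (n + 1) * Real.log ((n : ℝ) + 1) := by
  have hτ : τ ≠ 0 := ne_of_gt h0
  have hlog2 : Real.log 2 ≠ 0 := ne_of_gt (Real.log_pos (by norm_num))
  have hmeas : ∀ n : ℕ, AEStronglyMeasurable
      (fun x : ℝ => (τ ^ (n + 1) - 1) / (((n : ℝ) + 1 + x) * ((n : ℝ) + 2 + x)))
      (volume.restrict (Set.Ioc (0:ℝ) 1)) := by
    intro n
    apply Measurable.aestronglyMeasurable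
    exact Measurable.div measurable_const
      ((measurable_const.add measurable_id).mul (measurable_const.add measurable_id))
  have hb : ∀ n : ℕ, ∀ x ∈ Set.Ioc (0:ℝ) 1,
      ‖(τ ^ (n + 1) - 1) / (((n : ℝ) + 1 + x) * ((n : ℝ) + 2 + x))‖
        ≤ 1 / (((n:ℝ) + 1) * ((n:ℝ) + 2)) := by
    intro n x hx
    obtain ⟨hx0, hx1⟩ := hx
    have hn0 : (0:ℝ) ≤ (n:ℝ) := Nat.cast_nonneg n
    have hden : (0:ℝ) < ((n:ℝ) + 1 + x) * ((n:ℝ) + 2 + x) := by positivity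
    have hdenge : ((n:ℝ) + 1) * ((n:ℝ) + 2) ≤ ((n:ℝ) + 1 + x) * ((n:ℝ) + 2 + x) := by
      nlinarith
    have hnum : |τ ^ (n + 1) - 1| ≤ 1 := by
      have h1' : τ ^ (n + 1) ≤ 1 := pow_le_one₀ h0.le h1.le
      have h2' : 0 < τ ^ (n + 1) := pow_pos h0 _
      rw [abs_of_nonpos (by linarith)]
      linarith
    rw [Real.norm_eq_abs, abs_div, abs_of_pos hden]
    exact div_le_div₀ (by norm_num) hnum (by positivity) hdenge
  have hcbnn : ∀ n : ℕ, (0:ℝ) ≤ 1 / (((n:ℝ) + 1) * ((n:ℝ) + 2)) := by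
    intro n
    have hn0 : (0:ℝ) ≤ (n:ℝ) := Nat.cast_nonneg n
    positivity
  have hcbsum : Summable (fun n : ℕ => 1 / (((n:ℝ) + 1) * ((n:ℝ) + 2))) := by
    have base : Summable (fun n : ℕ => 1 / (n:ℝ) ^ 2) :=
      summable_one_div_nat_pow.mpr (by norm_num)
    have s1 : Summable (fun n : ℕ => 1 / ((n:ℝ) + 1) ^ 2) := by
      have := (summable_nat_add_iff 1).mpr base
      refine this.congr fun n => by push_cast; ring
    refine Summable.of_nonneg_of_le hcbnn (fun n => ?_) s1
    have hn0 : (0:ℝ) ≤ (n:ℝ) := Nat.cast_nonneg n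
    exact one_div_le_one_div_of_le (by positivity) (by nlinarith)
  have hlint : ∑' n : ℕ, ∫⁻ x in Set.Ioc (0:ℝ) 1,
      ‖(τ ^ (n + 1) - 1) / (((n : ℝ) + 1 + x) * ((n : ℝ) + 2 + x))‖₊ ∂volume ≠ ⊤ := by
    have hone : ∀ n : ℕ, ∫⁻ x in Set.Ioc (0:ℝ) 1,
        (‖(τ ^ (n + 1) - 1) / (((n : ℝ) + 1 + x) * ((n : ℝ) + 2 + x))‖₊ : ENNReal) ∂volume
        ≤ ENNReal.ofReal (1 / (((n:ℝ) + 1) * ((n:ℝ) + 2))) := by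
      intro n
      calc ∫⁻ x in Set.Ioc (0:ℝ) 1,
            (‖(τ ^ (n + 1) - 1) / (((n : ℝ) + 1 + x) * ((n : ℝ) + 2 + x))‖₊ : ENNReal) ∂volume
          ≤ ∫⁻ _x in Set.Ioc (0:ℝ) 1,
              ENNReal.ofReal (1 / (((n:ℝ) + 1) * ((n:ℝ) + 2))) ∂volume := by
            apply setLIntegral_mono measurable_const
            intro x hx
            rw [← ENNReal.ofReal_coe_nnreal, coe_nnnorm]
            exact ENNReal.ofReal_le_ofReal (hb n x hx)
        _ = ENNReal.ofReal (1 / (((n:ℝ) + 1) * ((n:ℝ) + 2))) * volume (Set.Ioc (0:ℝ) 1) := by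
            rw [MeasureTheory.setLIntegral_const]
        _ = ENNReal.ofReal (1 / (((n:ℝ) + 1) * ((n:ℝ) + 2))) := by
            rw [Real.volume_Ioc]
            norm_num
    have hle : ∑' n : ℕ, ∫⁻ x in Set.Ioc (0:ℝ) 1,
        (‖(τ ^ (n + 1) - 1) / (((n : ℝ) + 1 + x) * ((n : ℝ) + 2 + x))‖₊ : ENNReal) ∂volume
        ≤ ∑' n : ℕ, ENNReal.ofReal (1 / (((n:ℝ) + 1) * ((n:ℝ) + 2))) :=
      ENNReal.tsum_le_tsum hone
    rw [← ENNReal.ofReal_tsum_of_nonneg hcbnn hcbsum] at hle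
    exact ne_top_of_le_ne_top ENNReal.ofReal_ne_top hle
  rw [intervalIntegral.integral_of_le (by norm_num : (0:ℝ) ≤ 1)]
  rw [MeasureTheory.integral_tsum hmeas hlint]
  have hint : ∀ n : ℕ, ∫ x in Set.Ioc (0:ℝ) 1,
      (τ ^ (n + 1) - 1) / (((n : ℝ) + 1 + x) * ((n : ℝ) + 2 + x)) ∂volume
      = (τ ^ (n + 1) - 1) *
          ((Real.log ((n:ℝ) + 2) - Real.log ((n:ℝ) + 1))
            - (Real.log ((n:ℝ) + 3) - Real.log ((n:ℝ) + 2))) := by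
    intro n
    rw [← intervalIntegral.integral_of_le (by norm_num : (0:ℝ) ≤ 1)]
    have hfe : (fun x : ℝ => (τ ^ (n + 1) - 1) / (((n : ℝ) + 1 + x) * ((n : ℝ) + 2 + x)))
        = fun x => (τ ^ (n + 1) - 1) *
            (((((n:ℝ) + 1) + x) * (((n:ℝ) + 1) + 1 + x))⁻¹) := by
      funext x
      rw [div_eq_mul_inv]
      ring_nf
    rw [hfe, intervalIntegral.integral_const_mul,
      integral_term ((n:ℝ) + 1) (by have := Nat.cast_nonneg (α := ℝ) n; linarith)]
    ring_nf
  rw [tsum_congr hint]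
  set S : ℝ := ∑' n : ℕ, τ ^ (n + 1) * Real.log ((n : ℝ) + 1) with hS
  clear_value S
  have hA : Summable (fun n : ℕ => τ ^ (n + 1) * Real.log ((n : ℝ) + 1)) := by
    have := summable_pow_mul_log τ h0 h1 1 le_rfl
    exact this
  have hB : Summable (fun n : ℕ => τ ^ (n + 1) * Real.log ((n : ℝ) + 2)) := by
    have := summable_pow_mul_log τ h0 h1 2 (by norm_num)
    exact this
  have hC : Summable (fun n : ℕ => τ ^ (n + 1) * Real.log ((n : ℝ) + 3)) := by
    have := summable_pow_mul_log τ h0 h1 3 (by norm_num)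
    exact this
  have hBval : ∑' n : ℕ, τ ^ (n + 1) * Real.log ((n : ℝ) + 2) = S / τ := by
    have h := Summable.tsum_eq_zero_add hA
    have h2 : ∑' n : ℕ, τ ^ (n + 1 + 1) * Real.log ((↑(n+1) : ℝ) + 1)
        = τ * ∑' n : ℕ, τ ^ (n + 1) * Real.log ((n : ℝ) + 2) := by
      rw [← tsum_mul_left]
      apply tsum_congr
      intro n
      push_cast
      ring
    rw [← hS] at h
    rw [h2] at h
    have h0' : τ ^ (0 + 1) * Real.log ((0 : ℕ) + 1 : ℝ) = 0 := by norm_num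
    rw [h0'] at h
    rw [eq_div_iff hτ, mul_comm]
    linarith
  have hCval : ∑' n : ℕ, τ ^ (n + 1) * Real.log ((n : ℝ) + 3)
      = (S - τ ^ 2 * Real.log 2) / τ ^ 2 := by
    have h := Summable.tsum_eq_zero_add hA
    have hA' : Summable (fun n : ℕ => τ ^ (n + 1 + 1) * Real.log ((↑(n+1) : ℝ) + 1)) :=
      (summable_nat_add_iff (f := fun n : ℕ => τ ^ (n + 1) * Real.log ((n : ℝ) + 1)) 1).mpr hA
    have h' := Summable.tsum_eq_zero_add hA'
    have h2 : ∑' n : ℕ, τ ^ (n + 1 + 1 + 1) * Real.log ((↑(n+1+1) : ℝ) + 1)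
        = τ ^ 2 * ∑' n : ℕ, τ ^ (n + 1) * Real.log ((n : ℝ) + 3) := by
      rw [← tsum_mul_left]
      apply tsum_congr
      intro n
      push_cast
      ring
    rw [h2] at h'
    rw [← hS, h'] at h
    have h0' : τ ^ (0 + 1) * Real.log ((0 : ℕ) + 1 : ℝ) = 0 := by norm_num
    have h1' : τ ^ (0 + 1 + 1) * Real.log ((↑(0+1 : ℕ) : ℝ) + 1) = τ ^ 2 * Real.log 2 := by
      norm_num
    rw [h0', h1'] at h
    have hτ2 : τ ^ 2 ≠ 0 := pow_ne_zero 2 hτ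
    rw [eq_div_iff hτ2, mul_comm]
    linarith
  have hDs : Summable (fun n : ℕ =>
      (Real.log ((n:ℝ) + 2) - Real.log ((n:ℝ) + 1))
        - (Real.log ((n:ℝ) + 3) - Real.log ((n:ℝ) + 2))) := ⟨_, telescope_hasSum⟩
  have hDval : ∑' n : ℕ,
      ((Real.log ((n:ℝ) + 2) - Real.log ((n:ℝ) + 1))
        - (Real.log ((n:ℝ) + 3) - Real.log ((n:ℝ) + 2))) = Real.log 2 :=
    telescope_hasSum.tsum_eq
  have hT : Summable (fun n : ℕ => τ ^ (n + 1) *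
      ((Real.log ((n:ℝ) + 2) - Real.log ((n:ℝ) + 1))
        - (Real.log ((n:ℝ) + 3) - Real.log ((n:ℝ) + 2)))) := by
    have := ((hB.mul_left 2).sub hA).sub hC
    refine this.congr fun n => by ring
  have hTval : ∑' n : ℕ, τ ^ (n + 1) *
      ((Real.log ((n:ℝ) + 2) - Real.log ((n:ℝ) + 1))
        - (Real.log ((n:ℝ) + 3) - Real.log ((n:ℝ) + 2)))
      = 2 * (S / τ) - S - (S - τ ^ 2 * Real.log 2) / τ ^ 2 := by
    have e : (fun n : ℕ => τ ^ (n + 1) *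
        ((Real.log ((n:ℝ) + 2) - Real.log ((n:ℝ) + 1))
          - (Real.log ((n:ℝ) + 3) - Real.log ((n:ℝ) + 2))))
        = fun n : ℕ => (2 * (τ ^ (n + 1) * Real.log ((n:ℝ) + 2))
            - τ ^ (n + 1) * Real.log ((n:ℝ) + 1))
            - τ ^ (n + 1) * Real.log ((n:ℝ) + 3) := by
      funext n; ring
    rw [e, Summable.tsum_sub ((hB.mul_left 2).sub hA) hC,
      Summable.tsum_sub (hB.mul_left 2) hA, tsum_mul_left, hBval, hCval]
    rw [← hS]
  have hMain : ∑' n : ℕ, (τ ^ (n + 1) - 1) *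
      ((Real.log ((n:ℝ) + 2) - Real.log ((n:ℝ) + 1))
        - (Real.log ((n:ℝ) + 3) - Real.log ((n:ℝ) + 2)))
      = (2 * (S / τ) - S - (S - τ ^ 2 * Real.log 2) / τ ^ 2) - Real.log 2 := by
    have e : (fun n : ℕ => (τ ^ (n + 1) - 1) *
        ((Real.log ((n:ℝ) + 2) - Real.log ((n:ℝ) + 1))
          - (Real.log ((n:ℝ) + 3) - Real.log ((n:ℝ) + 2))))
        = fun n : ℕ => (τ ^ (n + 1) *
            ((Real.log ((n:ℝ) + 2) - Real.log ((n:ℝ) + 1))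
              - (Real.log ((n:ℝ) + 3) - Real.log ((n:ℝ) + 2))))
            - ((Real.log ((n:ℝ) + 2) - Real.log ((n:ℝ) + 1))
              - (Real.log ((n:ℝ) + 3) - Real.log ((n:ℝ) + 2))) := by
      funext n; ring
    rw [e, Summable.tsum_sub hT hDs, hTval, hDval]
  rw [hMain]
  field_simp
  ring
end

section
/- There exists a constant C > 0 such that for all complex τ with |τ| < 1, |Σ_{n≥1} τⁿ log n − [ (1/(1−τ))·log(1/(1−τ)) − γ/(1−τ) − (1/2)·log(1/(1−τ)) ]| ≤ C, where γ is the Euler–Mascheroni constant and log denotes the principal branch. In other words, Σ_{n≥1} τⁿ log n = (1/(1−τ))log(1/(1−τ)) − γ/(1−τ) − (1/2)log(1/(1−τ)) + O(1) uniformly for |τ| < 1. -/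
open Filter Real Topology Finset

lemma B2 {t : ℝ} (h0 : 0 ≤ t) (h1 : t < 1) : t + t^2/2 ≤ -Real.log (1 - t) := by
  have hs := Real.hasSum_pow_div_log_of_abs_lt_one (x := t) (by rw [abs_of_nonneg h0]; exact h1)
  have := sum_le_hasSum (Finset.range 2) (fun i _ => by positivity) hs
  simp only [Finset.sum_range_succ, Finset.sum_range_zero] at this
  norm_num at this ⊢
  linarith

lemma B1 {t : ℝ} (h0 : 0 ≤ t) (h1 : t < 1) :
    -Real.log (1 - t) ≤ t + t^2/(2*(1-t)) := by
  have hs := Real.hasSum_pow_div_log_of_abs_lt_one (x := t) (by rw [abs_of_nonneg h0]; exact h1)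
  have hs1 : HasSum (fun n : ℕ => t ^ (n + 1 + 1) / (n + 1 + 1)) (-Real.log (1 - t) - t) := by
    have := (hasSum_nat_add_iff' (f := fun n : ℕ => t ^ (n + 1) / (n + 1)) 1).2 hs
    simpa [Finset.sum_range_one] using this
  have hg : HasSum (fun n : ℕ => t ^ 2 / 2 * t ^ n) (t ^ 2 / 2 * (1 - t)⁻¹) :=
    (hasSum_geometric_of_lt_one h0 h1).mul_left (t ^ 2 / 2)
  have hle : -Real.log (1 - t) - t ≤ t ^ 2 / 2 * (1 - t)⁻¹ := by
    refine hasSum_le (fun n => ?_) hs1 hg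
    have hp : (0:ℝ) ≤ t ^ (n + 1 + 1) := by positivity
    have h2 : (2:ℝ) ≤ (n:ℝ) + 1 + 1 := by
      have : (0:ℝ) ≤ (n:ℝ) := Nat.cast_nonneg n
      linarith
    calc t ^ (n + 1 + 1) / (↑n + 1 + 1) ≤ t ^ (n + 1 + 1) / 2 :=
          div_le_div_of_nonneg_left hp (by norm_num) h2 |>.trans_eq rfl
      _ = t ^ 2 / 2 * t ^ n := by ring
  have h1t : (0:ℝ) < 1 - t := by linarith
  rw [div_eq_mul_inv, mul_comm (t^2)]
  calc -Real.log (1-t) ≤ t + t^2/2 * (1-t)⁻¹ := by linarith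
    _ = t + (2*(1-t))⁻¹ * t^2 := by rw [mul_inv]; ring


noncomputable def Useq (k : ℕ) : ℝ := (harmonic (k+1) : ℝ) - Real.log (k+1) - 1/(2*(k+1))
noncomputable def Vseq (k : ℕ) : ℝ := (harmonic (k+1) : ℝ) - Real.log (k+1) - 1/(2*(k+2))

lemma log_ratio (k : ℕ) :
    Real.log ((k:ℝ)+2) - Real.log ((k:ℝ)+1) = -Real.log (1 - 1/((k:ℝ)+2)) := by
  have h2 : (0:ℝ) < (k:ℝ) + 2 := by positivity
  have h1 : (0:ℝ) < (k:ℝ) + 1 := by positivity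
  have h : (1:ℝ) - 1/((k:ℝ)+2) = ((k:ℝ)+1)/((k:ℝ)+2) := by field_simp; ring
  rw [h, Real.log_div h1.ne' h2.ne']
  ring

lemma Useq_mono : Monotone Useq := by
  apply monotone_nat_of_le_succ
  intro k
  have h2 : (0:ℝ) < (k:ℝ) + 2 := by positivity
  have h1 : (0:ℝ) < (k:ℝ) + 1 := by positivity
  have ht0 : (0:ℝ) ≤ 1/((k:ℝ)+2) := by positivity
  have ht1 : 1/((k:ℝ)+2) < 1 := by rw [div_lt_one h2]; linarith
  have hb := B1 ht0 ht1
  rw [← log_ratio k] at hb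
  have hh : (harmonic (k+1+1) : ℝ) = (harmonic (k+1) : ℝ) + 1/((k:ℝ)+2) := by
    rw [harmonic_succ]; push_cast; ring
  simp only [Useq, hh]
  push_cast
  have hq : (1/((k:ℝ)+2))^2/(2*(1 - 1/((k:ℝ)+2))) = 1/(2*((k:ℝ)+1)*((k:ℝ)+2)) := by
    have hts : 1 - 1/((k:ℝ)+2) = ((k:ℝ)+1)/((k:ℝ)+2) := by field_simp; ring
    rw [hts]; field_simp
  rw [hq] at hb
  have h21 : ((k:ℝ)+1+1) = (k:ℝ)+2 := by ring
  rw [h21]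
  have heq : 1/(2*((k:ℝ)+1)) - 1/(2*((k:ℝ)+2)) = 1/(2*((k:ℝ)+1)*((k:ℝ)+2)) := by
    field_simp; ring
  linarith [hb, heq]

lemma Vseq_anti : Antitone Vseq := by
  apply antitone_nat_of_succ_le
  intro k
  have h2 : (0:ℝ) < (k:ℝ) + 2 := by positivity
  have h3 : (0:ℝ) < (k:ℝ) + 3 := by positivity
  have ht0 : (0:ℝ) ≤ 1/((k:ℝ)+2) := by positivity
  have ht1 : 1/((k:ℝ)+2) < 1 := by rw [div_lt_one h2]; linarith
  have hb := B2 ht0 ht1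
  rw [← log_ratio k] at hb
  have hh : (harmonic (k+1+1) : ℝ) = (harmonic (k+1) : ℝ) + 1/((k:ℝ)+2) := by
    rw [harmonic_succ]; push_cast; ring
  simp only [Vseq, hh]
  push_cast
  have h21 : ((k:ℝ)+1+1) = (k:ℝ)+2 := by ring
  have h22 : ((k:ℝ)+1+2) = (k:ℝ)+3 := by ring
  rw [h21, h22]
  have heq : 1/(2*((k:ℝ)+2)) - 1/(2*((k:ℝ)+3)) = 1/(2*((k:ℝ)+2)*((k:ℝ)+3)) := by
    field_simp; ring
  have haux : 1/(2*((k:ℝ)+2)*((k:ℝ)+3)) ≤ (1/((k:ℝ)+2))^2/2 := by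
    rw [div_le_div_iff₀ (by positivity) (by norm_num)]
    have : (1/((k:ℝ)+2))^2 = 1/(((k:ℝ)+2)*((k:ℝ)+2)) := by field_simp
    rw [this]
    rw [div_mul_eq_mul_div, one_mul, le_div_iff₀ (by positivity)]
    nlinarith
  linarith [hb, heq, haux]


lemma tendsto_aux : Filter.Tendsto (fun k : ℕ => 1/(2*((k:ℝ)+1))) Filter.atTop (nhds 0) := by
  have h2 := (tendsto_one_div_add_atTop_nhds_zero_nat (𝕜 := ℝ)).div_const 2
  rw [zero_div] at h2
  simp only [div_div] at h2
  exact h2.congr (fun k => by ring_nf)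

lemma harm_log_tendsto : Filter.Tendsto (fun k : ℕ => (harmonic (k+1) : ℝ) - Real.log ((k:ℝ)+1))
    Filter.atTop (nhds Real.eulerMascheroniConstant) :=
  (Real.tendsto_harmonic_sub_log.comp (Filter.tendsto_add_atTop_nat 1)).congr
    (fun k => by simp only [Function.comp]; push_cast; ring)

lemma Useq_tendsto : Filter.Tendsto Useq Filter.atTop (nhds Real.eulerMascheroniConstant) := by
  have := harm_log_tendsto.sub tendsto_aux
  rw [sub_zero] at this
  exact this

lemma Vseq_tendsto : Filter.Tendsto Vseq Filter.atTop (nhds Real.eulerMascheroniConstant) := by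
  have h2 : Filter.Tendsto (fun k : ℕ => 1/(2*((k:ℝ)+2))) Filter.atTop (nhds 0) :=
    (tendsto_aux.comp (Filter.tendsto_add_atTop_nat 1)).congr
      (fun k => by simp only [Function.comp]; push_cast; ring_nf)
  have := harm_log_tendsto.sub h2
  rw [sub_zero] at this
  exact this

lemma harm_sandwich (k : ℕ) :
    1/(2*((k:ℝ)+2)) ≤ (harmonic (k+1) : ℝ) - Real.log ((k:ℝ)+1) - Real.eulerMascheroniConstant
    ∧ (harmonic (k+1) : ℝ) - Real.log ((k:ℝ)+1) - Real.eulerMascheroniConstant ≤ 1/(2*((k:ℝ)+1)) := by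
  have hU : Useq k ≤ Real.eulerMascheroniConstant := Useq_mono.ge_of_tendsto Useq_tendsto k
  have hV : Real.eulerMascheroniConstant ≤ Vseq k := Vseq_anti.le_of_tendsto Vseq_tendsto k
  constructor
  · simp only [Vseq] at hV; linarith
  · simp only [Useq] at hU; linarith


lemma harm_le (n : ℕ) : (harmonic n : ℝ) ≤ n := by
  induction n with
  | zero => simp
  | succ n ih =>
    rw [harmonic_succ]
    push_cast
    have : ((n:ℝ)+1)⁻¹ ≤ 1 := by
      rw [inv_le_one_iff₀]; right; linarith [Nat.cast_nonneg (α := ℝ) n]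
    linarith

section C
variable {τ : ℂ} (hτ : ‖τ‖ < 1)

-- shifted neg-log series
lemma hlog1 (hτ : ‖τ‖ < 1) :
    HasSum (fun n : ℕ => τ^(n+1) / ((n:ℂ)+1)) (-Complex.log (1 - τ)) := by
  have h := Complex.hasSum_taylorSeries_neg_log hτ
  have := (hasSum_nat_add_iff' (f := fun n : ℕ => τ^n / (n:ℂ)) 1).2 h
  simpa using this

lemma hH (hτ : ‖τ‖ < 1) :
    HasSum (fun n : ℕ => τ^n * ((harmonic n : ℝ) : ℂ)) (-Complex.log (1 - τ) / (1 - τ)) := by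
  have hne : (1 : ℂ) - τ ≠ 0 := by
    intro h
    rw [sub_eq_zero] at h
    rw [← h] at hτ
    simp at hτ
  set f : ℕ → ℂ := fun n => τ^n * ((harmonic n : ℝ) : ℂ) with hf
  have hsum : Summable f := by
    refine Summable.of_norm_bounded (g := fun n => (n:ℝ) * ‖τ‖^n)
      (by simpa using summable_pow_mul_geometric_of_norm_lt_one (R := ℝ) 1 (by simpa using hτ))
      fun n => ?_
    · 
      rw [hf]
      simp only [norm_mul, norm_pow, Complex.norm_real]
      rw [mul_comm]
      apply mul_le_mul_of_nonneg_right _ (by positivity)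
      have h0 : (0:ℝ) ≤ (harmonic n : ℝ) := by
        rcases Nat.eq_zero_or_pos n with rfl | hn
        · simp
        · exact_mod_cast (harmonic_pos hn.ne').le
      rw [Real.norm_eq_abs, abs_of_nonneg h0]
      exact harm_le n
  obtain ⟨x, hx⟩ := hsum
  have h1 : HasSum (fun n => f (n+1)) x := by
    have := (hasSum_nat_add_iff' (f := f) 1).2 hx
    simpa [hf] using this
  have h3 := h1.sub (hx.mul_left τ)
  have hfun : (fun n : ℕ => f (n+1) - τ * f n) = fun n : ℕ => τ^(n+1) / ((n:ℂ)+1) := by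
    funext n
    have hh : (harmonic (n+1) : ℝ) = (harmonic n : ℝ) + ((n:ℝ)+1)⁻¹ := by
      rw [harmonic_succ]; push_cast; ring
    simp only [hf, hh]
    push_cast
    have hn : ((n:ℂ)+1) ≠ 0 := by
      intro h
      have := congrArg Complex.re h
      simp at this
      linarith [Nat.cast_nonneg (α := ℝ) n]
    field_simp
    ring
  rw [hfun] at h3
  have := h3.unique (hlog1 hτ)
  have hx2 : x = -Complex.log (1 - τ) / (1 - τ) := by
    rw [eq_div_iff hne]
    linear_combination this
  rwa [← hx2]
end C

lemma hb_hasSum : HasSum (fun k : ℕ => 1/(2*((k:ℝ)+1)) - 1/(2*((k:ℝ)+2))) (1/2 : ℝ) := by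
  set g : ℕ → ℝ := fun k => 1/(2*((k:ℝ)+1)) with hg
  have hgb : ∀ k, (fun k : ℕ => 1/(2*((k:ℝ)+1)) - 1/(2*((k:ℝ)+2))) k = g k - g (k+1) := by
    intro k; simp only [hg]; push_cast; ring
  have hnn : ∀ k : ℕ, 0 ≤ g k - g (k+1) := by
    intro k
    simp only [hg]
    rw [sub_nonneg]
    apply one_div_le_one_div_of_le (by positivity)
    push_cast
    linarith [Nat.cast_nonneg (α := ℝ) k]
  have hsum : ∀ n : ℕ, ∑ i ∈ Finset.range n, (g i - g (i+1)) = g 0 - g n :=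
    fun n => Finset.sum_range_sub' g n
  have hS : Summable (fun k => g k - g (k+1)) := by
    apply summable_of_sum_range_le hnn
    intro n
    rw [hsum n]
    have : 0 ≤ g n := by simp only [hg]; positivity
    have : g 0 = 1/2 := by simp [hg]
    linarith
  have hgt : Filter.Tendsto g Filter.atTop (nhds 0) := by
    have h2 := (tendsto_one_div_add_atTop_nhds_zero_nat (𝕜 := ℝ)).div_const 2
    rw [zero_div] at h2
    simp only [div_div] at h2
    exact h2.congr (fun k => by simp only [hg]; ring_nf)
  have : HasSum (fun k => g k - g (k+1)) (1/2) := by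
    rw [hS.hasSum_iff_tendsto_nat]
    simp only [hsum]
    have : g 0 = 1/2 := by simp [hg]
    rw [this]
    simpa using tendsto_const_nhds.sub hgt
  have hfe : (fun k : ℕ => 1/(2*((k:ℝ)+1)) - 1/(2*((k:ℝ)+2))) = fun k => g k - g (k+1) := funext hgb
  rw [hfe]
  exact this

/-- Uniformly for `|τ| < 1`:
`Σ_{n≥1} τⁿ log n = (1/(1-τ))log(1/(1-τ)) - γ/(1-τ) - (1/2)log(1/(1-τ)) + O(1)`,
where `γ` is the Euler–Mascheroni constant and `log` the principal branch. -/
theorem log_series_asymptotics :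
    ∃ C : ℝ, 0 < C ∧ ∀ τ : ℂ, ‖τ‖ < 1 →
      ‖(∑' n : ℕ, τ ^ (n + 1) * (Real.log ((n : ℝ) + 1) : ℂ)) -
          ((1 / (1 - τ)) * Complex.log (1 / (1 - τ))
            - (Real.eulerMascheroniConstant : ℂ) / (1 - τ)
            - (1 / 2) * Complex.log (1 / (1 - τ)))‖ ≤ C := by
  set γ := Real.eulerMascheroniConstant with hγ
  refine ⟨γ + 1, by linarith [Real.one_half_lt_eulerMascheroniConstant], fun τ hτ => ?_⟩
  have hne : (1 : ℂ) - τ ≠ 0 := by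
    intro h
    rw [sub_eq_zero] at h
    rw [← h] at hτ
    simp at hτ
  set Lg := Complex.log (1 - τ) with hLg
  -- the error coefficients
  set c : ℕ → ℝ := fun k => Real.log ((k:ℝ)+1) - (harmonic (k+1) : ℝ) + γ + 1/(2*((k:ℝ)+1)) with hc
  have hc0 : ∀ k, 0 ≤ c k := fun k => by
    have := (harm_sandwich k).2; simp only [hc]; linarith
  have hcb : ∀ k, c k ≤ 1/(2*((k:ℝ)+1)) - 1/(2*((k:ℝ)+2)) := fun k => by
    have := (harm_sandwich k).1; simp only [hc]; linarith
  have hτ1 : ∀ k : ℕ, ‖τ‖^(k+1) ≤ 1 := fun k => pow_le_one₀ (norm_nonneg τ) hτ.le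
  have hnormc : ∀ k : ℕ, ‖τ^(k+1) * ((c k : ℝ) : ℂ)‖ ≤ 1/(2*((k:ℝ)+1)) - 1/(2*((k:ℝ)+2)) := by
    intro k
    rw [norm_mul, norm_pow, Complex.norm_real, Real.norm_eq_abs, abs_of_nonneg (hc0 k)]
    calc ‖τ‖^(k+1) * c k ≤ 1 * c k := by
          apply mul_le_mul_of_nonneg_right (hτ1 k) (hc0 k)
      _ = c k := one_mul _
      _ ≤ _ := hcb k
  have hA4sum : Summable (fun k : ℕ => τ^(k+1) * ((c k : ℝ) : ℂ)) :=
    Summable.of_norm_bounded hb_hasSum.summable hnormc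
  obtain ⟨R, hR⟩ := hA4sum
  have hRb : ‖R‖ ≤ 1/2 := by
    rw [← hR.tsum_eq]
    exact tsum_of_norm_bounded hb_hasSum hnormc
  -- component series
  have A1 : HasSum (fun k : ℕ => τ^(k+1) * ((harmonic (k+1) : ℝ) : ℂ)) (-Lg / (1 - τ)) := by
    have := (hasSum_nat_add_iff' (f := fun n : ℕ => τ^n * ((harmonic n : ℝ) : ℂ)) 1).2 (hH hτ)
    simpa using this
  have A2 : HasSum (fun k : ℕ => τ^(k+1) * (γ : ℂ)) (((1 - τ)⁻¹ - 1) * (γ : ℂ)) := by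
    have hgeo := hasSum_geometric_of_norm_lt_one hτ
    have := (hasSum_nat_add_iff' (f := fun n : ℕ => τ^n) 1).2 hgeo
    simp only [Finset.sum_range_one, pow_zero] at this
    exact this.mul_right _
  have A3 : HasSum (fun k : ℕ => τ^(k+1) / ((k:ℂ)+1) / 2) (-Lg / 2) := (hlog1 hτ).div_const 2
  have hcomb := ((A1.sub A2).sub A3).add hR
  have hfun : (fun k : ℕ => τ^(k+1) * ((harmonic (k+1) : ℝ) : ℂ) - τ^(k+1) * (γ : ℂ)
      - τ^(k+1) / ((k:ℂ)+1) / 2 + τ^(k+1) * ((c k : ℝ) : ℂ))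
      = fun k : ℕ => τ ^ (k + 1) * ((Real.log ((k : ℝ) + 1) : ℝ) : ℂ) := by
    funext k
    have hn : ((k:ℂ)+1) ≠ 0 := by
      intro h
      have := congrArg Complex.re h
      simp at this
      linarith [Nat.cast_nonneg (α := ℝ) k]
    simp only [hc]
    push_cast
    field_simp
    ring
  rw [hfun] at hcomb
  rw [hcomb.tsum_eq]
  -- rewrite the logarithm
  have harg : (1 - τ).arg ≠ Real.pi := by
    intro h
    rw [Complex.arg_eq_pi_iff] at h
    have h1 : τ.re ≤ ‖τ‖ := Complex.re_le_norm τ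
    have h2 : (1 - τ).re = 1 - τ.re := by simp
    rw [h2] at h
    have := h.1
    linarith
  have hlogdiv : Complex.log (1 / (1 - τ)) = -Lg := by
    rw [one_div, Complex.log_inv _ harg]
  rw [hlogdiv]
  have hkey : -Lg / (1 - τ) - ((1 - τ)⁻¹ - 1) * (γ : ℂ) - -Lg / 2 + R -
      (1 / (1 - τ) * -Lg - (γ : ℂ) / (1 - τ) - 1 / 2 * -Lg) = (γ : ℂ) + R := by
    field_simp
    ring
  rw [hkey]
  calc ‖(γ : ℂ) + R‖ ≤ ‖(γ : ℂ)‖ + ‖R‖ := norm_add_le _ _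
    _ ≤ γ + 1/2 := by
        rw [Complex.norm_real, Real.norm_eq_abs,
          abs_of_nonneg (by linarith [Real.one_half_lt_eulerMascheroniConstant])]
        linarith
    _ ≤ γ + 1 := by linarith
end
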